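/- For the Jacobi weight w(x) = (1-x)^α (1+x)^β with α, β > 0, the pre-differentiation matrix entry with n = 0 satisfies D̃_{m,0} = ∫_{-1}^1 (d/dx)[√w(x) P_m^{(α,β)}(x)] √w(x) dx = 2^{α+β-1} Γ(α+1) Γ(β+1) / Γ(α+β+m+1) · [(β+1)_m − (−1)^m (α+1)_m] for all m ∈ ℕ, where (z)_m is the Pochhammer symbol. -/

import Mathlib

/-- The Jacobi polynomial `P_n^{(α,β)}`, defined by its hypergeometric-type sum. -/
noncomputable def jacobiP (n : ℕ) (α β : ℝ) (x : ℝ) : ℝ :=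
  (Real.Gamma (α + n + 1) / (n.factorial * Real.Gamma (α + β + n + 1))) *
    ∑ m ∈ Finset.range (n + 1),
      (n.choose m : ℝ) * Real.Gamma (α + β + n + m + 1) / Real.Gamma (α + m + 1) *
        ((x - 1) / 2) ^ m

/-- The Pochhammer symbol (rising factorial) for a real argument. -/
noncomputable def poch (z : ℝ) (m : ℕ) : ℝ := ∏ k ∈ Finset.range m, (z + k)

open Finset Polynomial fwdDiff intervalIntegral MeasureTheory Set

namespace Stmt6Aux


lemma neg_one_pow_sub {n j : ℕ} (h : j ≤ n) : (-1:ℝ)^(n-j) = (-1)^n * (-1)^j := by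
  conv_rhs => rw [← Nat.sub_add_cancel h, pow_add, mul_assoc, ← pow_add]
  rw [← two_mul, pow_mul]
  norm_num

lemma taylor_sub_natDegree {p : ℝ[X]} {n : ℕ} (hp : p.natDegree ≤ n + 1) :
    (taylor 1 p - p).natDegree ≤ n := by
  rw [natDegree_le_iff_coeff_eq_zero]
  intro N hN
  rcases Nat.lt_or_ge (n+1) N with h | h
  · have h1 : (taylor 1 p).natDegree < N := by rw [natDegree_taylor]; omega
    have h2 : p.natDegree < N := by omega
    rw [coeff_sub, coeff_eq_zero_of_natDegree_lt h1, coeff_eq_zero_of_natDegree_lt h2, sub_zero]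
  · have hNn : N = n + 1 := by omega
    subst hNn
    have h1 : Polynomial.hasseDeriv (n+1) p = C (p.coeff (n+1)) := by
      ext j
      rcases Nat.eq_zero_or_pos j with rfl | hj
      · simp [Polynomial.hasseDeriv_coeff]
      · rw [Polynomial.hasseDeriv_coeff, coeff_C, if_neg hj.ne']
        have : p.natDegree < j + (n+1) := by omega
        simp [coeff_eq_zero_of_natDegree_lt this]
    rw [coeff_sub, taylor_coeff, h1, eval_C, sub_self]

lemma taylor_sub_coeff {p : ℝ[X]} {n : ℕ} (hp : p.natDegree ≤ n + 1) :
    (taylor 1 p - p).coeff n = (n + 1 : ℝ) * p.coeff (n + 1) := by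
  have h1 : Polynomial.hasseDeriv n p
      = C (p.coeff n) + C ((n+1 : ℝ) * p.coeff (n+1)) * X := by
    ext j
    match j with
    | 0 => simp [Polynomial.hasseDeriv_coeff]
    | 1 =>
      rw [Polynomial.hasseDeriv_coeff, add_comm 1 n, Nat.choose_succ_self_right]
      simp only [coeff_add, coeff_C, if_neg one_ne_zero, coeff_C_mul, coeff_X_one, mul_one,
        zero_add]
      push_cast; ring
    | (j+2) =>
      rw [Polynomial.hasseDeriv_coeff]
      have h2 : p.natDegree < j + 2 + n := by omega
      rw [coeff_eq_zero_of_natDegree_lt h2, coeff_add, coeff_C, if_neg (by omega),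
        coeff_C_mul, coeff_X, if_neg (by omega)]
      push_cast; ring
  rw [coeff_sub, taylor_coeff, h1]
  simp

lemma fwdDiff_iter_poly (n : ℕ) (p : ℝ[X]) (hp : p.natDegree ≤ n) (x : ℝ) :
    (Δ_[(1:ℝ)])^[n] (fun y => p.eval y) x = n.factorial * p.coeff n := by
  induction n generalizing p x with
  | zero =>
    have h := Polynomial.eq_C_of_natDegree_le_zero hp
    rw [Function.iterate_zero_apply, h]
    simp
  | succ n ih =>
    rw [Function.iterate_succ_apply]
    have hq : Δ_[(1:ℝ)] (fun y => p.eval y) = fun y => (taylor 1 p - p).eval y := by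
      funext y
      simp [fwdDiff, taylor_eval]
    rw [hq, ih _ (taylor_sub_natDegree hp), taylor_sub_coeff hp]
    push_cast [Nat.factorial_succ]
    ring

lemma sum_alt_poly (n : ℕ) (p : ℝ[X]) (hp : p.natDegree ≤ n) :
    ∑ j ∈ range (n + 1), (-1 : ℝ) ^ j * (n.choose j) * p.eval (j : ℝ)
      = (-1) ^ n * n.factorial * p.coeff n := by
  have h := fwdDiff_iter_eq_sum_shift (1 : ℝ) (fun y => p.eval y) n 0
  rw [fwdDiff_iter_poly n p hp 0] at h
  have h2 : ∀ j ∈ range (n+1),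
      (((-1 : ℤ) ^ (n - j) * (n.choose j)) • p.eval ((0 : ℝ) + j • (1:ℝ)))
      = (-1:ℝ)^n * ((-1 : ℝ) ^ j * (n.choose j) * p.eval (j : ℝ)) := by
    intro j hj
    rw [Finset.mem_range, Nat.lt_succ_iff] at hj
    rw [zsmul_eq_mul]
    push_cast
    rw [neg_one_pow_sub hj]
    ring_nf
  rw [Finset.sum_congr rfl h2, ← Finset.mul_sum] at h
  have h3 : ((-1:ℝ)^n) * ((-1:ℝ)^n) = 1 := by
    rw [← pow_add, ← two_mul, pow_mul]; norm_num
  calc ∑ j ∈ range (n + 1), (-1 : ℝ) ^ j * (n.choose j) * p.eval (j : ℝ)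
      = ((-1:ℝ)^n * (-1:ℝ)^n) * ∑ j ∈ range (n + 1), (-1 : ℝ) ^ j * (n.choose j) * p.eval (j : ℝ) := by
        rw [h3, one_mul]
    _ = (-1:ℝ)^n * ((-1:ℝ)^n * ∑ j ∈ range (n + 1), (-1 : ℝ) ^ j * (n.choose j) * p.eval (j : ℝ)) := by
        ring
    _ = (-1:ℝ)^n * (n.factorial * p.coeff n) := by rw [h]
    _ = (-1) ^ n * n.factorial * p.coeff n := by ring



lemma sum_inv (n : ℕ) (x : ℝ) (hx : ∀ j : ℕ, j ≤ n → x + j ≠ 0) :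
    ∑ j ∈ range (n + 1), (-1 : ℝ) ^ j * (n.choose j) / (x + j)
      = n.factorial / ∏ i ∈ range (n + 1), (x + i) := by
  induction n generalizing x with
  | zero => simp
  | succ n ih =>
    have hx0 : x ≠ 0 := by simpa using hx 0 (by omega)
    have e1 : ∀ j ∈ range (n+1), (-1 : ℝ) ^ (j+1) * ((n+1).choose (j+1)) / (x + (↑j + 1))
        = (-1 : ℝ) ^ (j+1) * (n.choose j) / (x + (↑j + 1))
          + (-1 : ℝ) ^ (j+1) * (n.choose (j+1)) / (x + (↑j + 1)) := by
      intro j hj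
      rw [Nat.choose_succ_succ]
      push_cast
      ring
    have e4 : ∀ j ∈ range (n+1), (-1 : ℝ) ^ (j+1) * (n.choose j) / (x + (↑j + 1))
        = -((-1 : ℝ) ^ j * (n.choose j) / ((x+1) + j)) := by
      intro j hj
      have h : x + ((j:ℝ) + 1) = (x + 1) + j := by ring
      rw [h, pow_succ]
      ring
    have e2 : ∑ j ∈ range (n+1), (-1 : ℝ) ^ (j+1) * (n.choose (j+1)) / (x + (↑j + 1))
        = (∑ j ∈ range (n+2), (-1 : ℝ) ^ j * (n.choose j) / (x + j))
          - (n.choose 0 : ℝ) / x := by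
      rw [Finset.sum_range_succ' (fun j => (-1 : ℝ) ^ j * (n.choose j) / (x + j)) (n+1)]
      push_cast
      ring
    have e3 : ∑ j ∈ range (n+2), (-1 : ℝ) ^ j * (n.choose j) / (x + j)
        = ∑ j ∈ range (n+1), (-1 : ℝ) ^ j * (n.choose j) / (x + j) := by
      rw [Finset.sum_range_succ]
      simp
    have hsplit : ∑ j ∈ range (n + 2), (-1 : ℝ) ^ j * ((n+1).choose j) / (x + j)
        = (∑ j ∈ range (n + 1), (-1 : ℝ) ^ j * (n.choose j) / (x + j))
          - ∑ j ∈ range (n + 1), (-1 : ℝ) ^ j * (n.choose j) / ((x + 1) + j) := by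
      rw [Finset.sum_range_succ' (fun j => (-1 : ℝ) ^ j * ((n+1).choose j) / (x + j)) (n+1)]
      push_cast
      rw [Finset.sum_congr rfl e1, Finset.sum_add_distrib, Finset.sum_congr rfl e4, e2, e3]
      rw [Finset.sum_neg_distrib]
      simp only [Nat.choose_zero_right, Nat.cast_one]
      push_cast
      ring
    rw [hsplit, ih x (fun j hj => hx j (by omega)), ih (x+1) ?_]
    swap
    · intro j hj
      have := hx (j+1) (by omega)
      push_cast at this ⊢
      intro hc; apply this; linarith
    · have hR : ∀ i : ℕ, i ∈ range (n+1) → x + 1 + (i:ℝ) ≠ 0 := by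
        intro i hi
        rw [Finset.mem_range] at hi
        have := hx (i+1) (by omega)
        push_cast at this ⊢
        intro hc; apply this; linarith
      have hP : ∏ i ∈ range (n + 1), (x + (i:ℝ))
          = x * ∏ i ∈ range n, (x + 1 + (i:ℝ)) := by
        rw [Finset.prod_range_succ' (fun i => x + (i:ℝ)) n, mul_comm]
        congr 1
        · push_cast; ring
        · exact Finset.prod_congr rfl fun i _ => by push_cast; ring
      have hQ : ∏ i ∈ range (n + 2), (x + (i:ℝ))
          = x * ∏ i ∈ range (n+1), (x + 1 + (i:ℝ)) := by
        rw [Finset.prod_range_succ' (fun i => x + (i:ℝ)) (n+1), mul_comm]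
        congr 1
        · push_cast; ring
        · exact Finset.prod_congr rfl fun i _ => by push_cast; ring
      have hR2 : ∏ i ∈ range (n+1), (x + 1 + (i:ℝ))
          = (∏ i ∈ range n, (x + 1 + (i:ℝ))) * (x + 1 + n) := Finset.prod_range_succ _ _
      have hR0ne : (∏ i ∈ range n, (x + 1 + (i:ℝ))) ≠ 0 := by
        apply Finset.prod_ne_zero_iff.mpr
        intro i hi
        exact hR i (by rw [Finset.mem_range] at hi ⊢; omega)
      have hlast : x + 1 + (n:ℝ) ≠ 0 := hR n (by rw [Finset.mem_range]; omega)
      rw [hP, hQ, hR2]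
      field_simp
      push_cast [Nat.factorial_succ]
      ring


lemma key_sum (n : ℕ) (c x : ℝ) (hx : ∀ j : ℕ, j ≤ n → x + j ≠ 0) :
    ∑ j ∈ range (n + 1),
        (-1 : ℝ) ^ j * (n.choose j) * ((∏ i ∈ range (n + 1), (c + j + i)) / (x + j))
      = (-1) ^ n * n.factorial
        + (∏ i ∈ range (n + 1), (c - x + i)) * n.factorial / ∏ i ∈ range (n + 1), (x + i) := by
  set P : ℝ[X] := ∏ i ∈ range (n + 1), (X + C (c + i)) with hPdef
  have hPmonic : P.Monic := monic_prod_of_monic _ _ fun i _ => monic_X_add_C _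
  have hPdeg : P.natDegree = n + 1 := by
    rw [hPdef, natDegree_prod_of_monic (range (n+1)) (fun i : ℕ => X + C (c + (i:ℝ))) (fun i _ => monic_X_add_C _)]
    simp only [natDegree_X_add_C, Finset.sum_const, smul_eq_mul, mul_one, card_range]
  have hPeval : ∀ y : ℝ, P.eval y = ∏ i ∈ range (n + 1), (c + y + i) := by
    intro y
    rw [eval_prod]
    exact Finset.prod_congr rfl fun i _ => by simp; ring
  set e : ℝ := ∏ i ∈ range (n + 1), (c - x + i) with hedef
  have hPe : P.eval (-x) = e := by rw [hPeval]; exact Finset.prod_congr rfl fun i _ => by ring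
  obtain ⟨q, hq⟩ : (X - C (-x)) ∣ (P - C e) := by rw [← hPe]; exact X_sub_C_dvd_sub_C_eval
  have hXC : (X - C (-x) : ℝ[X]) = X + C x := by rw [map_neg, sub_neg_eq_add]
  rw [hXC] at hq
  -- degree and leading coeff of the subtracted polynomial
  have hPece : (P - C e).coeff (n+1) = 1 := by
    rw [coeff_sub, coeff_C, if_neg (Nat.succ_ne_zero n), sub_zero, ← hPdeg]
    exact hPmonic.coeff_natDegree
  have hPene : P - C e ≠ 0 := fun h => by simp [h] at hPece
  have hqne : q ≠ 0 := fun h => by rw [h, mul_zero] at hq; exact hPene hq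
  have hXx : (X + C x : ℝ[X]) ≠ 0 := (monic_X_add_C x).ne_zero
  have hdegPe : (P - C e).natDegree = n + 1 := by
    have h1 : (P - C e).natDegree ≤ n + 1 := by
      apply natDegree_sub_le_iff_left _ |>.mpr
      · rw [hPdeg]
      · rw [natDegree_C]; omega
    have h2 : n + 1 ≤ (P - C e).natDegree := le_natDegree_of_ne_zero (by rw [hPece]; norm_num)
    omega
  have hqdeg : q.natDegree = n := by
    have := natDegree_mul hXx hqne
    rw [← hq, hdegPe, natDegree_X_add_C] at this
    omega
  have hqcoeff : q.coeff n = 1 := by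
    have h1 : (P - C e).coeff (n+1) = q.coeff n + x * q.coeff (n+1) := by
      rw [hq, add_mul, X_mul, coeff_add, coeff_mul_X, coeff_C_mul]
    have h2 : q.coeff (n+1) = 0 := coeff_eq_zero_of_natDegree_lt (by omega)
    rw [hPece, h2] at h1
    linarith [h1]
  -- pointwise partial fractions
  have hpt : ∀ j ∈ range (n + 1),
      (-1 : ℝ) ^ j * (n.choose j) * ((∏ i ∈ range (n + 1), (c + j + i)) / (x + j))
        = (-1 : ℝ) ^ j * (n.choose j) * q.eval (j:ℝ)
          + e * ((-1 : ℝ) ^ j * (n.choose j) / (x + j)) := by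
    intro j hj
    rw [Finset.mem_range, Nat.lt_succ_iff] at hj
    have hxj : x + (j:ℝ) ≠ 0 := hx j hj
    have hev : ∏ i ∈ range (n + 1), (c + (j:ℝ) + i) = ((j:ℝ) + x) * q.eval (j:ℝ) + e := by
      have := congrArg (fun p : ℝ[X] => p.eval (j:ℝ)) hq
      simp only [eval_sub, eval_mul, eval_add, eval_X, eval_C] at this
      rw [← hPeval]
      linarith [this]
    rw [hev]
    field_simp
    ring
  rw [Finset.sum_congr rfl hpt, Finset.sum_add_distrib, ← Finset.mul_sum,
    sum_alt_poly n q (le_of_eq hqdeg), sum_inv n x hx, hqcoeff]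
  rw [hedef]
  ring



lemma Gamma_shift (x : ℝ) (hx : 0 < x) (n : ℕ) :
    Real.Gamma (x + n) = (∏ i ∈ range n, (x + i)) * Real.Gamma x := by
  induction n with
  | zero => simp
  | succ n ih =>
    have h1 : x + ((n:ℝ) + 1) = (x + n) + 1 := by ring
    push_cast
    rw [h1, Real.Gamma_add_one (by positivity), ih, Finset.prod_range_succ]
    ring

lemma real_beta (a b : ℝ) (ha : 0 < a) (hb : 0 < b) :
    ∫ x in (0:ℝ)..1, x ^ (a - 1) * (1 - x) ^ (b - 1)
      = Real.Gamma a * Real.Gamma b / Real.Gamma (a + b) := by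
  have key := Complex.Gamma_mul_Gamma_eq_betaIntegral (s := (a:ℂ)) (t := (b:ℂ))
    (by simpa using ha) (by simpa using hb)
  have hBI : Complex.betaIntegral a b
      = ((∫ x in (0:ℝ)..1, x ^ (a - 1) * (1 - x) ^ (b - 1) : ℝ) : ℂ) := by
    rw [Complex.betaIntegral, ← intervalIntegral.integral_ofReal]
    rw [intervalIntegral.integral_of_le zero_le_one, intervalIntegral.integral_of_le zero_le_one]
    apply setIntegral_congr_fun measurableSet_Ioc
    intro x hx
    dsimp only
    have hx0 : (0:ℝ) ≤ x := le_of_lt hx.1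
    have hx1 : (0:ℝ) ≤ 1 - x := by linarith [hx.2]
    rw [show ((a:ℂ) - 1) = ((a - 1 : ℝ) : ℂ) from by push_cast; ring,
      show ((b:ℂ) - 1) = ((b - 1 : ℝ) : ℂ) from by push_cast; ring,
      show (1 - (x:ℂ)) = ((1 - x : ℝ) : ℂ) from by push_cast; ring,
      ← Complex.ofReal_cpow hx0, ← Complex.ofReal_cpow hx1]
    push_cast
    ring
  rw [hBI] at key
  have hG : Complex.Gamma ((a:ℂ) + (b:ℂ)) = ((Real.Gamma (a+b) : ℝ) : ℂ) := by
    rw [← Complex.ofReal_add, Complex.Gamma_ofReal]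
  rw [Complex.Gamma_ofReal, Complex.Gamma_ofReal, hG] at key
  have hGne : Real.Gamma (a + b) ≠ 0 := (Real.Gamma_pos_of_pos (by linarith)).ne'
  have key2 : Real.Gamma a * Real.Gamma b
      = Real.Gamma (a+b) * ∫ x in (0:ℝ)..1, x ^ (a - 1) * (1 - x) ^ (b - 1) := by
    exact_mod_cast key
  rw [key2]
  field_simp

lemma jacobi_weight_integral (p q : ℝ) (hp : -1 < p) (hq : -1 < q) :
    ∫ x in (-1:ℝ)..1, (1 - x) ^ p * (1 + x) ^ q
      = 2 ^ (p + q + 1) * (Real.Gamma (p+1) * Real.Gamma (q+1) / Real.Gamma (p + q + 2)) := by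
  have h := intervalIntegral.integral_comp_mul_add
    (f := fun x => (1 - x) ^ p * (1 + x) ^ q) (a := 0) (b := 1) (c := 2) two_ne_zero (-1)
  simp only [mul_zero, zero_add, mul_one] at h
  -- h : ∫ t in 0..1, f (2*t + -1) = 2⁻¹ • ∫ x in (0*2 + -1)..(1*2+-1), f x  (check form)
  have h2 : ∫ t in (0:ℝ)..1, (1 - (2*t + -1)) ^ p * (1 + (2*t + -1)) ^ q
      = 2 ^ (p + q) * ∫ t in (0:ℝ)..1, t ^ (q + 1 - 1) * (1 - t) ^ (p + 1 - 1) := by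
    rw [← intervalIntegral.integral_const_mul]
    rw [intervalIntegral.integral_of_le zero_le_one, intervalIntegral.integral_of_le zero_le_one]
    apply setIntegral_congr_fun measurableSet_Ioc
    intro t ht
    dsimp only
    have ht0 : (0:ℝ) < t := ht.1
    have ht1 : (0:ℝ) ≤ 1 - t := by linarith [ht.2]
    have e1 : 1 - (2*t + -1) = 2 * (1 - t) := by ring
    have e2 : 1 + (2*t + -1) = 2 * t := by ring
    rw [e1, e2, Real.mul_rpow (by norm_num) ht1, Real.mul_rpow (by norm_num) ht0.le]
    rw [Real.rpow_add two_pos p q,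
      show q + 1 - 1 = q from by ring, show p + 1 - 1 = p from by ring]
    ring
  rw [show (2:ℝ) + -1 = 1 from by norm_num] at h
  rw [h2, real_beta (q+1) (p+1) (by linarith) (by linarith), smul_eq_mul,
    show q + 1 + (p + 1) = p + q + 2 from by ring] at h
  have h4 : ∫ x in (-1:ℝ)..1, (1-x)^p*(1+x)^q
      = 2 * (2 ^ (p+q) * (Real.Gamma (q+1) * Real.Gamma (p+1) / Real.Gamma (p+q+2))) := by
    linarith
  rw [h4, show p + q + 1 = 1 + (p + q) from by ring, Real.rpow_add two_pos 1 (p+q), Real.rpow_one]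
  ring


lemma integrable_weight (p q : ℝ) (hp : -1 < p) (hq : -1 < q) :
    IntervalIntegrable (fun x : ℝ => (1 - x) ^ p * (1 + x) ^ q) volume (-1) 1 := by
  have hleft : IntervalIntegrable (fun x : ℝ => (1 - x) ^ p * (1 + x) ^ q) volume (-1) 0 := by
    have h1 : IntervalIntegrable (fun x : ℝ => (x + 1) ^ q) volume (-1) 0 := by
      have := (intervalIntegral.intervalIntegrable_rpow' (a := 0) (b := 1) hq).comp_add_right 1
      norm_num at this
      exact this
    have h2 : ContinuousOn (fun x : ℝ => (1 - x) ^ p) (Set.uIcc (-1) 0) := by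
      apply ContinuousOn.rpow_const
      · exact (continuous_const.sub continuous_id).continuousOn
      · intro x hx
        rw [Set.uIcc_of_le (by norm_num : (-1:ℝ) ≤ 0)] at hx
        left
        have := hx.2
        intro hc
        nlinarith [hc]
    have h3 := h1.continuousOn_mul h2
    have hfun : (fun x : ℝ => (1 - x) ^ p * (1 + x) ^ q)
        = fun x : ℝ => (1 - x) ^ p * (x + 1) ^ q := by
      funext x; rw [add_comm 1 x]
    rw [hfun]
    exact h3
  have hright : IntervalIntegrable (fun x : ℝ => (1 - x) ^ p * (1 + x) ^ q) volume 0 1 := by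
    have h1 : IntervalIntegrable (fun x : ℝ => (1 - x) ^ p) volume 0 1 := by
      have := (intervalIntegral.intervalIntegrable_rpow' (a := 0) (b := 1) hp).comp_sub_left 1
      norm_num at this
      exact this.symm
    have h2 : ContinuousOn (fun x : ℝ => (1 + x) ^ q) (Set.uIcc 0 1) := by
      apply ContinuousOn.rpow_const
      · exact (continuous_const.add continuous_id).continuousOn
      · intro x hx
        rw [Set.uIcc_of_le (by norm_num : (0:ℝ) ≤ 1)] at hx
        left
        have := hx.1
        intro hc
        nlinarith [hc]
    exact h1.mul_continuousOn h2
  exact hleft.trans hright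



lemma pointwise_eq (α β : ℝ) (hα : 0 < α) (hβ : 0 < β) (m : ℕ) (x : ℝ)
    (hx : x ∈ Set.Ioo (-1:ℝ) 1) :
    deriv (fun y => Real.sqrt ((1 - y) ^ α * (1 + y) ^ β) * jacobiP m α β y) x
        * Real.sqrt ((1 - x) ^ α * (1 + x) ^ β)
      = (Real.Gamma (α + m + 1) / (m.factorial * Real.Gamma (α + β + m + 1)))
        * ∑ k ∈ Finset.range (m+1),
            ((m.choose k : ℝ) * Real.Gamma (α + β + m + k + 1) / Real.Gamma (α + k + 1))
            * ((-1:ℝ)^k / 2^k)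
            * ((β/2) * ((1-x) ^ (α+(k:ℝ)) * (1+x) ^ (β-1))
               - (α/2+(k:ℝ)) * ((1-x) ^ (α+(k:ℝ)-1) * (1+x) ^ β)) := by
  obtain ⟨hx1, hx2⟩ := hx
  have h1 : (0:ℝ) < 1 - x := by linarith
  have h2 : (0:ℝ) < 1 + x := by linarith
  set c0 : ℝ := Real.Gamma (α + m + 1) / (m.factorial * Real.Gamma (α + β + m + 1)) with hc0
  set A : ℕ → ℝ := fun k =>
    (m.choose k : ℝ) * Real.Gamma (α + β + m + k + 1) / Real.Gamma (α + k + 1) with hA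
  have hsqrt : ∀ y : ℝ, -1 < y → y < 1 →
      Real.sqrt ((1 - y) ^ α * (1 + y) ^ β) = (1 - y) ^ (α/2) * (1 + y) ^ (β/2) := by
    intro y hy1 hy2
    have k1 : (0:ℝ) < 1 - y := by linarith
    have k2 : (0:ℝ) < 1 + y := by linarith
    rw [Real.sqrt_eq_rpow,
      Real.mul_rpow (Real.rpow_nonneg k1.le α) (Real.rpow_nonneg k2.le β),
      ← Real.rpow_mul k1.le, ← Real.rpow_mul k2.le,
      show α * (1/2) = α/2 from by ring, show β * (1/2) = β/2 from by ring]
  have hjac : (fun y => jacobiP m α β y)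
      = fun y => c0 * ∑ k ∈ Finset.range (m+1), A k * ((y-1)/2)^k := by
    funext y
    rw [jacobiP, hc0, hA]
  have hPder : ∀ t : ℝ, HasDerivAt (fun y => jacobiP m α β y)
      (c0 * ∑ k ∈ Finset.range (m+1), A k * ((k:ℝ) * ((t-1)/2)^(k-1) * (1/2))) t := by
    intro t
    rw [hjac]
    apply HasDerivAt.const_mul
    apply HasDerivAt.fun_sum
    intro k _
    apply HasDerivAt.const_mul
    have hb : HasDerivAt (fun y : ℝ => (y-1)/2) (1/2) t :=
      ((hasDerivAt_id t).sub_const 1).div_const 2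
    have := hb.fun_pow k
    simpa using this
  have hu : HasDerivAt (fun y : ℝ => (1-y) ^ (α/2)) (-1 * (α/2) * (1-x)^(α/2-1)) x := by
    have hb : HasDerivAt (fun y : ℝ => 1 - y) (-1) x := by
      simpa using (hasDerivAt_id x).const_sub 1
    exact hb.rpow_const (Or.inl h1.ne')
  have hv : HasDerivAt (fun y : ℝ => (1+y) ^ (β/2)) (1 * (β/2) * (1+x)^(β/2-1)) x := by
    have hb : HasDerivAt (fun y : ℝ => 1 + y) 1 x := by
      simpa using (hasDerivAt_id x).const_add 1
    exact hb.rpow_const (Or.inl h2.ne')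
  have hg : HasDerivAt (fun y => ((1-y)^(α/2) * (1+y)^(β/2)) * jacobiP m α β y)
      (((-1 * (α/2) * (1-x)^(α/2-1)) * (1+x)^(β/2)
          + (1-x)^(α/2) * (1 * (β/2) * (1+x)^(β/2-1))) * jacobiP m α β x
        + ((1-x)^(α/2) * (1+x)^(β/2))
            * (c0 * ∑ k ∈ Finset.range (m+1), A k * ((k:ℝ) * ((x-1)/2)^(k-1) * (1/2)))) x :=
    (hu.mul hv).mul (hPder x)
  have hDeriv : deriv (fun y => Real.sqrt ((1 - y) ^ α * (1 + y) ^ β) * jacobiP m α β y) x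
      = ((-1 * (α/2) * (1-x)^(α/2-1)) * (1+x)^(β/2)
          + (1-x)^(α/2) * (1 * (β/2) * (1+x)^(β/2-1))) * jacobiP m α β x
        + ((1-x)^(α/2) * (1+x)^(β/2))
            * (c0 * ∑ k ∈ Finset.range (m+1), A k * ((k:ℝ) * ((x-1)/2)^(k-1) * (1/2))) := by
    have hev : (fun y => Real.sqrt ((1 - y) ^ α * (1 + y) ^ β) * jacobiP m α β y)
        =ᶠ[nhds x] (fun y => ((1-y)^(α/2) * (1+y)^(β/2)) * jacobiP m α β y) := by
      filter_upwards [Ioo_mem_nhds hx1 hx2] with y hy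
      rw [hsqrt y hy.1 hy.2]
    rw [Filter.EventuallyEq.deriv_eq hev]
    exact hg.deriv
  have hjx : jacobiP m α β x = c0 * ∑ k ∈ Finset.range (m+1), A k * ((x-1)/2)^k :=
    congrFun hjac x
  rw [hDeriv, hsqrt x hx1 hx2, hjx]
  -- abbreviations for the four rpow atoms
  have m1 : (1-x)^(α/2-1) * (1-x)^(α/2) = (1-x)^(α-1) := by
    rw [← Real.rpow_add h1, show α/2-1+α/2 = α-1 from by ring]
  have m2 : (1+x)^(β/2) * (1+x)^(β/2) = (1+x)^β := by
    rw [← Real.rpow_add h2, show β/2+β/2 = β from by ring]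
  have m3 : (1-x)^(α/2) * (1-x)^(α/2) = (1-x)^α := by
    rw [← Real.rpow_add h1, show α/2+α/2 = α from by ring]
  have m4 : (1+x)^(β/2-1) * (1+x)^(β/2) = (1+x)^(β-1) := by
    rw [← Real.rpow_add h2, show β/2-1+β/2 = β-1 from by ring]
  set u1 : ℝ := (1-x)^(α-1) with hu1
  set v1 : ℝ := (1+x)^(β-1) with hv1
  set u2 : ℝ := (1-x)^α with hu2
  set v2 : ℝ := (1+x)^β with hv2
  have hαsplit : u2 = u1 * (1-x) := by
    have h := Real.rpow_add h1 (α-1) 1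
    rw [Real.rpow_one, show α - 1 + 1 = α from by ring] at h
    rw [hu2, hu1]
    exact h
  have key : ∀ k ∈ Finset.range (m+1),
      (A k * ((x-1)/2)^k)
          * ((-1 * (α/2) * (1-x)^(α/2-1) * (1+x)^(β/2)
              + (1-x)^(α/2) * (1 * (β/2) * (1+x)^(β/2-1))) * ((1-x)^(α/2)*(1+x)^(β/2)))
        + (A k * ((k:ℝ) * ((x-1)/2)^(k-1) * (1/2)))
          * (((1-x)^(α/2)*(1+x)^(β/2)) * ((1-x)^(α/2)*(1+x)^(β/2)))
      = A k * ((-1:ℝ)^k / 2^k)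
          * ((β/2) * ((1-x) ^ (α+(k:ℝ)) * v1) - (α/2+(k:ℝ)) * ((1-x) ^ (α+(k:ℝ)-1) * v2)) := by
    intro k _
    have hC1 : (-1 * (α/2) * (1-x)^(α/2-1) * (1+x)^(β/2)
          + (1-x)^(α/2) * (1 * (β/2) * (1+x)^(β/2-1))) * ((1-x)^(α/2)*(1+x)^(β/2))
        = -(α/2) * (u1 * v2) + (β/2) * (u2 * v1) := by
      calc (-1 * (α/2) * (1-x)^(α/2-1) * (1+x)^(β/2)
          + (1-x)^(α/2) * (1 * (β/2) * (1+x)^(β/2-1))) * ((1-x)^(α/2)*(1+x)^(β/2))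
          = -(α/2) * (((1-x)^(α/2-1) * (1-x)^(α/2)) * ((1+x)^(β/2) * (1+x)^(β/2)))
            + (β/2) * (((1-x)^(α/2) * (1-x)^(α/2)) * ((1+x)^(β/2-1) * (1+x)^(β/2))) := by ring
        _ = -(α/2) * (u1 * v2) + (β/2) * (u2 * v1) := by rw [m1, m2, m3, m4]
    have hC2 : ((1-x)^(α/2)*(1+x)^(β/2)) * ((1-x)^(α/2)*(1+x)^(β/2)) = u2 * v2 := by
      calc ((1-x)^(α/2)*(1+x)^(β/2)) * ((1-x)^(α/2)*(1+x)^(β/2))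
          = ((1-x)^(α/2) * (1-x)^(α/2)) * ((1+x)^(β/2) * (1+x)^(β/2)) := by ring
        _ = u2 * v2 := by rw [m2, m3]
    rw [hC1, hC2]
    match k with
    | 0 =>
      have e0 : (1-x) ^ (α+((0:ℕ):ℝ)) = u2 := by
        rw [show α+((0:ℕ):ℝ) = α from by push_cast; ring, hu2]
      have e0' : (1-x) ^ (α+((0:ℕ):ℝ)-1) = u1 := by
        rw [show α+((0:ℕ):ℝ)-1 = α-1 from by push_cast; ring, hu1]
      rw [e0, e0']
      simp only [pow_zero, Nat.cast_zero]
      ring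
    | (j+1) =>
      have hsj : ((x-1)/2)^j = (-1:ℝ)^j * (1-x)^j / 2^j := by
        rw [div_pow, show (x-1) = (-1)*(1-x) from by ring, mul_pow]
      have hsj1 : ((x-1)/2)^(j+1) = (-1:ℝ)^(j+1) * (1-x)^(j+1) / 2^(j+1) := by
        rw [div_pow, show (x-1) = (-1)*(1-x) from by ring, mul_pow]
      have he1 : (1-x) ^ (α+((j+1:ℕ):ℝ)) = u2 * (1-x)^(j+1) := by
        rw [Real.rpow_add h1, Real.rpow_natCast, hu2]
      have he2 : (1-x) ^ (α+((j+1:ℕ):ℝ)-1) = u1 * (1-x)^(j+1) := by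
        rw [show α+((j+1:ℕ):ℝ)-1 = (α-1) + ((j+1:ℕ):ℝ) from by ring,
          Real.rpow_add h1, Real.rpow_natCast, hu1]
      rw [he1, he2, Nat.add_sub_cancel, hsj, hsj1, hαsplit]
      rw [pow_succ (-1:ℝ) j, pow_succ (1-x) j, pow_succ (2:ℝ) j]
      have h2j : (2:ℝ)^j ≠ 0 := by positivity
      push_cast
      field_simp
      ring
  calc ((-1 * (α/2) * (1-x)^(α/2-1) * (1+x)^(β/2)
          + (1-x)^(α/2) * (1 * (β/2) * (1+x)^(β/2-1)))
            * (c0 * ∑ k ∈ Finset.range (m+1), A k * ((x-1)/2)^k)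
        + (1-x)^(α/2) * (1+x)^(β/2)
            * (c0 * ∑ k ∈ Finset.range (m+1), A k * ((k:ℝ) * ((x-1)/2)^(k-1) * (1/2))))
          * ((1-x)^(α/2) * (1+x)^(β/2))
      = c0 * ((∑ k ∈ Finset.range (m+1), A k * ((x-1)/2)^k)
            * ((-1 * (α/2) * (1-x)^(α/2-1) * (1+x)^(β/2)
                + (1-x)^(α/2) * (1 * (β/2) * (1+x)^(β/2-1))) * ((1-x)^(α/2)*(1+x)^(β/2)))
          + (∑ k ∈ Finset.range (m+1), A k * ((k:ℝ) * ((x-1)/2)^(k-1) * (1/2)))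
            * (((1-x)^(α/2)*(1+x)^(β/2)) * ((1-x)^(α/2)*(1+x)^(β/2)))) := by ring
    _ = c0 * ((∑ k ∈ Finset.range (m+1), (A k * ((x-1)/2)^k)
            * ((-1 * (α/2) * (1-x)^(α/2-1) * (1+x)^(β/2)
                + (1-x)^(α/2) * (1 * (β/2) * (1+x)^(β/2-1))) * ((1-x)^(α/2)*(1+x)^(β/2))))
          + ∑ k ∈ Finset.range (m+1), (A k * ((k:ℝ) * ((x-1)/2)^(k-1) * (1/2)))
            * (((1-x)^(α/2)*(1+x)^(β/2)) * ((1-x)^(α/2)*(1+x)^(β/2)))) := by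
        rw [Finset.sum_mul, Finset.sum_mul]
    _ = c0 * ∑ k ∈ Finset.range (m+1),
          ((A k * ((x-1)/2)^k)
            * ((-1 * (α/2) * (1-x)^(α/2-1) * (1+x)^(β/2)
                + (1-x)^(α/2) * (1 * (β/2) * (1+x)^(β/2-1))) * ((1-x)^(α/2)*(1+x)^(β/2)))
          + (A k * ((k:ℝ) * ((x-1)/2)^(k-1) * (1/2)))
            * (((1-x)^(α/2)*(1+x)^(β/2)) * ((1-x)^(α/2)*(1+x)^(β/2)))) := by
        rw [← Finset.sum_add_distrib]
    _ = c0 * ∑ k ∈ Finset.range (m+1),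
          A k * ((-1:ℝ)^k / 2^k)
          * ((β/2) * ((1-x) ^ (α+(k:ℝ)) * v1) - (α/2+(k:ℝ)) * ((1-x) ^ (α+(k:ℝ)-1) * v2)) := by
        rw [Finset.sum_congr rfl key]



lemma final_algebra (α β : ℝ) (hα : 0 < α) (hβ : 0 < β) (m : ℕ) :
    (Real.Gamma (α + m + 1) / (m.factorial * Real.Gamma (α + β + m + 1)))
      * ∑ k ∈ Finset.range (m+1),
          ((m.choose k : ℝ) * Real.Gamma (α + β + m + k + 1) / Real.Gamma (α + k + 1))
          * ((-1:ℝ)^k / 2^k)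
            * ((β/2) * (2 ^ ((α+(k:ℝ)) + (β-1) + 1)
                  * (Real.Gamma ((α+(k:ℝ))+1) * Real.Gamma ((β-1)+1)
                      / Real.Gamma ((α+(k:ℝ)) + (β-1) + 2)))
               - (α/2+(k:ℝ)) * (2 ^ ((α+(k:ℝ)-1) + β + 1)
                  * (Real.Gamma ((α+(k:ℝ)-1)+1) * Real.Gamma (β+1)
                      / Real.Gamma ((α+(k:ℝ)-1) + β + 2))))
      = 2 ^ (α + β - 1) * Real.Gamma (α + 1) * Real.Gamma (β + 1) /
          Real.Gamma (α + β + m + 1) *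
          (poch (β + 1) m - (-1) ^ m * poch (α + 1) m) := by
  have hGpos : ∀ y : ℝ, 0 < y → (0:ℝ) < Real.Gamma y := fun y hy => Real.Gamma_pos_of_pos hy
  -- Step 1 : per-term simplification
  have hterm : ∀ k ∈ Finset.range (m+1),
      ((m.choose k : ℝ) * Real.Gamma (α + β + m + k + 1) / Real.Gamma (α + k + 1))
          * ((-1:ℝ)^k / 2^k)
            * ((β/2) * (2 ^ ((α+(k:ℝ)) + (β-1) + 1)
                  * (Real.Gamma ((α+(k:ℝ))+1) * Real.Gamma ((β-1)+1)
                      / Real.Gamma ((α+(k:ℝ)) + (β-1) + 2)))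
               - (α/2+(k:ℝ)) * (2 ^ ((α+(k:ℝ)-1) + β + 1)
                  * (Real.Gamma ((α+(k:ℝ)-1)+1) * Real.Gamma (β+1)
                      / Real.Gamma ((α+(k:ℝ)-1) + β + 2))))
      = 2 ^ (α + β - 1) * Real.Gamma (β+1) *
          ((-1:ℝ)^(k+1) * (k:ℝ) * (m.choose k : ℝ)
            * (∏ i ∈ range m, (α+β+(k:ℝ)+1+(i:ℝ))) / (α+(k:ℝ))) := by
    intro k _
    have hk0 : (0:ℝ) ≤ (k:ℝ) := Nat.cast_nonneg k
    have hak : (0:ℝ) < α + (k:ℝ) := by linarith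
    have g1 : Real.Gamma (α+β+(m:ℝ)+(k:ℝ)+1)
        = (∏ i ∈ range m, (α+β+(k:ℝ)+1+(i:ℝ))) * Real.Gamma (α+β+(k:ℝ)+1) := by
      have h := Gamma_shift (α+β+(k:ℝ)+1) (by linarith) m
      rw [show α+β+(k:ℝ)+1+(m:ℝ) = α+β+(m:ℝ)+(k:ℝ)+1 from by ring] at h
      exact h
    have g2 : Real.Gamma (α+(k:ℝ)+1) = (α+(k:ℝ)) * Real.Gamma (α+(k:ℝ)) :=
      Real.Gamma_add_one hak.ne'
    have g3 : Real.Gamma ((β-1)+1) = Real.Gamma β := by norm_num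
    have g4 : Real.Gamma ((α+(k:ℝ)) + (β-1) + 2) = Real.Gamma (α+β+(k:ℝ)+1) := by
      congr 1; ring
    have g5 : Real.Gamma ((α+(k:ℝ)-1)+1) = Real.Gamma (α+(k:ℝ)) := by
      congr 1; ring
    have g6 : Real.Gamma ((α+(k:ℝ)-1) + β + 2) = Real.Gamma (α+β+(k:ℝ)+1) := by
      congr 1; ring
    have g7 : Real.Gamma (β+1) = β * Real.Gamma β := Real.Gamma_add_one hβ.ne'
    have p1 : (2:ℝ) ^ ((α+(k:ℝ)) + (β-1) + 1) = 2 ^ (α+β-1) * 2 * 2^k := by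
      rw [show (α+(k:ℝ)) + (β-1) + 1 = (α+β-1) + 1 + (k:ℝ) from by ring,
        Real.rpow_add two_pos, Real.rpow_add two_pos, Real.rpow_one, Real.rpow_natCast]
    have p2 : (2:ℝ) ^ ((α+(k:ℝ)-1) + β + 1) = 2 ^ (α+β-1) * 2 * 2^k := by
      rw [show (α+(k:ℝ)-1) + β + 1 = (α+β-1) + 1 + (k:ℝ) from by ring,
        Real.rpow_add two_pos, Real.rpow_add two_pos, Real.rpow_one, Real.rpow_natCast]
    rw [g1, g2, g3, g4, g5, g6, g7, p1, p2]
    have n1 : Real.Gamma (α+β+(k:ℝ)+1) ≠ 0 := (hGpos _ (by linarith)).ne'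
    have n2 : Real.Gamma (α+(k:ℝ)) ≠ 0 := (hGpos _ hak).ne'
    have n3 : (2:ℝ)^k ≠ 0 := by positivity
    have n4 : Real.Gamma β ≠ 0 := (hGpos _ hβ).ne'
    field_simp
    ring
  rw [Finset.sum_congr rfl hterm, ← Finset.mul_sum]
  -- Step 2 : evaluate the remaining sum
  rcases m with _ | n
  · simp [poch]
  · -- strip the k = 0 term
    set g : ℕ → ℝ := fun k => (-1:ℝ)^(k+1) * (k:ℝ) * ((n+1).choose k : ℝ)
        * (∏ i ∈ range (n+1), (α+β+(k:ℝ)+1+(i:ℝ))) / (α+(k:ℝ)) with hg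
    have hgsum : ∑ k ∈ Finset.range (n+2), g k = ∑ j ∈ Finset.range (n+1), g (j+1) + g 0 :=
      Finset.sum_range_succ' g (n+1)
    have hg0 : g 0 = 0 := by simp [hg]
    have hx : ∀ j : ℕ, j ≤ n → (α+1) + (j:ℝ) ≠ 0 := by
      intro j _
      have : (0:ℝ) ≤ (j:ℝ) := Nat.cast_nonneg j
      positivity
    have hgj : ∀ j ∈ Finset.range (n+1), g (j+1)
        = ((n:ℝ)+1) * ((-1:ℝ)^j * (n.choose j : ℝ)
            * ((∏ i ∈ range (n+1), ((α+β+2) + (j:ℝ) + (i:ℝ))) / ((α+1)+(j:ℝ)))) := by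
      intro j hj
      have hjn : j ≤ n := by have := Finset.mem_range.mp hj; omega
      rw [hg]
      dsimp only
      have hch : ((j:ℝ)+1) * ((n+1).choose (j+1) : ℝ) = ((n:ℝ)+1) * (n.choose j : ℝ) := by
        have := Nat.add_one_mul_choose_eq n j
        have h2 : ((n.succ * n.choose j : ℕ) : ℝ) = (((n+1).choose (j+1) * (j+1) : ℕ) : ℝ) := by
          exact_mod_cast congrArg (Nat.cast (R := ℝ)) this
        push_cast at h2
        linarith
      have hprod : (∏ i ∈ range (n+1), (α+β+((j:ℝ)+1)+1+(i:ℝ)))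
          = ∏ i ∈ range (n+1), ((α+β+2) + (j:ℝ) + (i:ℝ)) := by
        apply Finset.prod_congr rfl
        intro i _
        ring_nf
      have hD : (α+1)+(j:ℝ) ≠ 0 := hx j hjn
      push_cast
      rw [hprod, show α+((j:ℝ)+1) = (α+1)+(j:ℝ) from by ring]
      field_simp
      linear_combination (-1:ℝ)^j * hch
    rw [hgsum, hg0, add_zero, Finset.sum_congr rfl hgj, ← Finset.mul_sum,
      key_sum n (α+β+2) (α+1) hx]
    have hbeta : (∏ i ∈ range (n+1), ((α+β+2) - (α+1) + (i:ℝ))) = poch (β+1) (n+1) := by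
      rw [poch]
      exact Finset.prod_congr rfl fun i _ => by ring
    have halpha : (∏ i ∈ range (n+1), ((α+1) + (i:ℝ))) = poch (α+1) (n+1) := by
      rw [poch]
    rw [hbeta, halpha]
    have hGm : Real.Gamma (α+((n:ℝ)+1)+1) = poch (α+1) (n+1) * Real.Gamma (α+1) := by
      have h := Gamma_shift (α+1) (by linarith) (n+1)
      rw [show (α+1)+((n+1:ℕ):ℝ) = α+((n:ℝ)+1)+1 from by push_cast; ring] at h
      rw [h, poch]
    have hpochpos : (0:ℝ) < poch (α+1) (n+1) := by
      rw [poch]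
      apply Finset.prod_pos
      intro i _
      have : (0:ℝ) ≤ (i:ℝ) := Nat.cast_nonneg i
      linarith
    have hGab : (0:ℝ) < Real.Gamma (α+β+((n:ℝ)+1)+1) := hGpos _ (by linarith)
    have hfact : ((n+1).factorial : ℝ) = ((n:ℝ)+1) * (n.factorial : ℝ) := by
      push_cast [Nat.factorial_succ]
      ring
    push_cast
    rw [hGm, hfact]
    have hnfac : ((n.factorial : ℝ)) ≠ 0 := by positivity
    field_simp
    ring


end Stmt6Aux

open Finset intervalIntegral MeasureTheory Set Stmt6Aux in
theorem stmt6 (α β : ℝ) (hα : 0 < α) (hβ : 0 < β) (m : ℕ) :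
    (∫ x in (-1 : ℝ)..1,
        deriv (fun y => Real.sqrt ((1 - y) ^ α * (1 + y) ^ β) * jacobiP m α β y) x *
          Real.sqrt ((1 - x) ^ α * (1 + x) ^ β))
      = 2 ^ (α + β - 1) * Real.Gamma (α + 1) * Real.Gamma (β + 1) /
          Real.Gamma (α + β + m + 1) *
          (poch (β + 1) m - (-1) ^ m * poch (α + 1) m) := by
  set c0 : ℝ := Real.Gamma (α + m + 1) / (m.factorial * Real.Gamma (α + β + m + 1)) with hc0
  set A : ℕ → ℝ := fun k =>
    (m.choose k : ℝ) * Real.Gamma (α + β + m + k + 1) / Real.Gamma (α + k + 1) with hA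
  -- replace the integrand a.e.
  have step1 : (∫ x in (-1 : ℝ)..1,
        deriv (fun y => Real.sqrt ((1 - y) ^ α * (1 + y) ^ β) * jacobiP m α β y) x *
          Real.sqrt ((1 - x) ^ α * (1 + x) ^ β))
      = ∫ x in (-1 : ℝ)..1, c0 * ∑ k ∈ Finset.range (m+1),
          A k * ((-1:ℝ)^k / 2^k)
            * ((β/2) * ((1-x) ^ (α+(k:ℝ)) * (1+x) ^ (β-1))
               - (α/2+(k:ℝ)) * ((1-x) ^ (α+(k:ℝ)-1) * (1+x) ^ β)) := by
    apply intervalIntegral.integral_congr_ae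
    have h1 : ∀ᵐ (x:ℝ) ∂volume, x ≠ 1 := by
      rw [MeasureTheory.ae_iff]
      convert Real.volume_singleton (a := 1) using 2
      ext y; simp
    filter_upwards [h1] with x hx1 hxI
    rw [Set.uIoc_of_le (by norm_num : (-1:ℝ) ≤ 1)] at hxI
    have hxIoo : x ∈ Set.Ioo (-1:ℝ) 1 := ⟨hxI.1, lt_of_le_of_ne hxI.2 hx1⟩
    exact pointwise_eq α β hα hβ m x hxIoo
  -- integrability of each summand
  have hint : ∀ k ∈ Finset.range (m+1), IntervalIntegrable
      (fun x : ℝ => A k * ((-1:ℝ)^k / 2^k)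
            * ((β/2) * ((1-x) ^ (α+(k:ℝ)) * (1+x) ^ (β-1))
               - (α/2+(k:ℝ)) * ((1-x) ^ (α+(k:ℝ)-1) * (1+x) ^ β))) volume (-1) 1 := by
    intro k _
    apply IntervalIntegrable.const_mul
    have hk0 : (0:ℝ) ≤ (k:ℝ) := Nat.cast_nonneg k
    have i1 : IntervalIntegrable (fun x : ℝ => (1-x) ^ (α+(k:ℝ)) * (1+x) ^ (β-1)) volume (-1) 1 :=
      integrable_weight _ _ (by linarith) (by linarith)
    have i2 : IntervalIntegrable (fun x : ℝ => (1-x) ^ (α+(k:ℝ)-1) * (1+x) ^ β) volume (-1) 1 :=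
      integrable_weight _ _ (by linarith) (by linarith)
    exact (i1.const_mul (β/2)).sub (i2.const_mul (α/2+(k:ℝ)))
  -- compute the integral
  have step2 : (∫ x in (-1 : ℝ)..1, c0 * ∑ k ∈ Finset.range (m+1),
          A k * ((-1:ℝ)^k / 2^k)
            * ((β/2) * ((1-x) ^ (α+(k:ℝ)) * (1+x) ^ (β-1))
               - (α/2+(k:ℝ)) * ((1-x) ^ (α+(k:ℝ)-1) * (1+x) ^ β)))
      = c0 * ∑ k ∈ Finset.range (m+1),
          A k * ((-1:ℝ)^k / 2^k)
            * ((β/2) * (2 ^ ((α+(k:ℝ)) + (β-1) + 1)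
                  * (Real.Gamma ((α+(k:ℝ))+1) * Real.Gamma ((β-1)+1)
                      / Real.Gamma ((α+(k:ℝ)) + (β-1) + 2)))
               - (α/2+(k:ℝ)) * (2 ^ ((α+(k:ℝ)-1) + β + 1)
                  * (Real.Gamma ((α+(k:ℝ)-1)+1) * Real.Gamma (β+1)
                      / Real.Gamma ((α+(k:ℝ)-1) + β + 2)))) := by
    rw [intervalIntegral.integral_const_mul]
    congr 1
    rw [intervalIntegral.integral_finset_sum hint]
    apply Finset.sum_congr rfl
    intro k _
    have hk0 : (0:ℝ) ≤ (k:ℝ) := Nat.cast_nonneg k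
    have i1 : IntervalIntegrable (fun x : ℝ => (1-x) ^ (α+(k:ℝ)) * (1+x) ^ (β-1)) volume (-1) 1 :=
      integrable_weight _ _ (by linarith) (by linarith)
    have i2 : IntervalIntegrable (fun x : ℝ => (1-x) ^ (α+(k:ℝ)-1) * (1+x) ^ β) volume (-1) 1 :=
      integrable_weight _ _ (by linarith) (by linarith)
    rw [intervalIntegral.integral_const_mul]
    congr 1
    rw [intervalIntegral.integral_sub (i1.const_mul _) (i2.const_mul _),
      intervalIntegral.integral_const_mul, intervalIntegral.integral_const_mul,
      jacobi_weight_integral _ _ (by linarith) (by linarith),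
      jacobi_weight_integral _ _ (by linarith) (by linarith)]
  rw [step1, step2]
  simp only [hc0, hA]
  exact Stmt6Aux.final_algebra α β hα hβ m
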